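/- Let N ≥ 1 be an integer, m ∈ ℤ, and let ψ : ℂ → ℂ be holomorphic on ℂ∖{0} with ψ(z) ≠ 0 for z ≠ 0. Suppose that ψ(ζ·z) = ζ^m·ψ(z) for every ζ ∈ ℂ with ζ^N = 1 and every z ≠ 0 (with ζ^m the integer power). Then there exists g : ℂ → ℂ holomorphic on ℂ∖{0} with g(w) ≠ 0 for w ≠ 0 such that ψ(z) = z^m·g(z^N) for all z ≠ 0. Conversely, every map of this form satisfies ψ(ζ·z) = ζ^m·ψ(z) for all N-th roots of unity ζ and all z ≠ 0. -/

import Mathlib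

open Complex

private lemma root_pow {N : ℕ} (hN : 1 ≤ N) {w : ℂ} (hw : w ≠ 0) :
    (Complex.exp (Complex.log w / N)) ^ N = w := by
  have hNc : (N : ℂ) ≠ 0 := Nat.cast_ne_zero.mpr (by omega)
  rw [← Complex.exp_nat_mul, mul_div_cancel₀ _ hNc, Complex.exp_log hw]

private lemma welldef {N : ℕ} {m : ℤ} {ψ : ℂ → ℂ}
    (heq : ∀ ζ : ℂ, ζ ^ N = 1 → ∀ z : ℂ, z ≠ 0 → ψ (ζ * z) = ζ ^ m * ψ z)
    {z₁ z₂ : ℂ} (h₁ : z₁ ≠ 0) (h₂ : z₂ ≠ 0) (hpow : z₁ ^ N = z₂ ^ N) :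
    ψ z₁ / z₁ ^ m = ψ z₂ / z₂ ^ m := by
  have hζ : (z₁ / z₂) ^ N = 1 := by
    rw [div_pow, hpow, div_self (pow_ne_zero _ h₂)]
  have h := heq (z₁ / z₂) hζ z₂ h₂
  rw [div_mul_cancel₀ _ h₂] at h
  have e1 : z₁ ^ m ≠ 0 := zpow_ne_zero _ h₁
  have e2 : z₂ ^ m ≠ 0 := zpow_ne_zero _ h₂
  rw [h, div_zpow]
  field_simp

theorem stmt_12 (N : ℕ) (hN : 1 ≤ N) (m : ℤ) :
    (∀ ψ : ℂ → ℂ,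
      (∀ z : ℂ, z ≠ 0 → DifferentiableAt ℂ ψ z) →
      (∀ z : ℂ, z ≠ 0 → ψ z ≠ 0) →
      (∀ ζ : ℂ, ζ ^ N = 1 → ∀ z : ℂ, z ≠ 0 → ψ (ζ * z) = ζ ^ m * ψ z) →
      ∃ g : ℂ → ℂ,
        (∀ w : ℂ, w ≠ 0 → DifferentiableAt ℂ g w) ∧
        (∀ w : ℂ, w ≠ 0 → g w ≠ 0) ∧
        ∀ z : ℂ, z ≠ 0 → ψ z = z ^ m * g (z ^ N)) ∧
    (∀ g : ℂ → ℂ,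
      (∀ w : ℂ, w ≠ 0 → DifferentiableAt ℂ g w) →
      (∀ w : ℂ, w ≠ 0 → g w ≠ 0) →
      ∀ ζ : ℂ, ζ ^ N = 1 → ∀ z : ℂ, z ≠ 0 →
        (ζ * z) ^ m * g ((ζ * z) ^ N) = ζ ^ m * (z ^ m * g (z ^ N))) := by
  constructor
  · intro ψ hdiff hne heq
    set r : ℂ → ℂ := fun w => Complex.exp (Complex.log w / N) with hr
    have hrne : ∀ w : ℂ, r w ≠ 0 := fun w => Complex.exp_ne_zero _
    have hrpow : ∀ w : ℂ, w ≠ 0 → (r w) ^ N = w := fun w hw => root_pow hN hw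
    refine ⟨fun w => if w = 0 then 0 else ψ (r w) / (r w) ^ m, ?_, ?_, ?_⟩
    · -- differentiability
      intro w₀ hw₀
      set h : ℂ → ℂ := fun w => r w₀ * Complex.exp (Complex.log (w / w₀) / N) with hh
      have hh0 : h w₀ = r w₀ := by
        simp [hh, div_self hw₀, Complex.log_one]
      have hlog : DifferentiableAt ℂ (fun w => Complex.log (w / w₀)) w₀ := by
        refine DifferentiableAt.clog (differentiableAt_id.div_const w₀) ?_
        simp [div_self hw₀, Complex.one_mem_slitPlane]
      have hhd : DifferentiableAt ℂ h w₀ :=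
        ((hlog.div_const _).cexp).const_mul _
      have hHd : DifferentiableAt ℂ (fun w => ψ (h w) / (h w) ^ m) w₀ := by
        have h1 : DifferentiableAt ℂ (fun w => ψ (h w)) w₀ := by
          have := (hdiff _ (hh0 ▸ hrne w₀ : h w₀ ≠ 0)).comp w₀ hhd
          exact this
        have h2 : DifferentiableAt ℂ (fun w => (h w) ^ m) w₀ :=
          hhd.zpow (Or.inl (hh0 ▸ hrne w₀))
        exact h1.div h2 (by rw [hh0]; exact zpow_ne_zero _ (hrne w₀))
      refine hHd.congr_of_eventuallyEq ?_
      filter_upwards [eventually_ne_nhds hw₀] with w hw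
      have hhw : h w ≠ 0 := mul_ne_zero (hrne w₀) (Complex.exp_ne_zero _)
      have hhwp : (h w) ^ N = w := by
        rw [hh]
        simp only
        rw [mul_pow, hrpow w₀ hw₀, root_pow hN (div_ne_zero hw hw₀)]
        field_simp
      simp only [if_neg hw]
      exact welldef heq (hrne w) hhw (by rw [hrpow w hw, hhwp])
    · intro w hw
      simp only [if_neg hw]
      exact div_ne_zero (hne _ (hrne w)) (zpow_ne_zero _ (hrne w))
    · intro z hz
      have hzN : z ^ N ≠ 0 := pow_ne_zero _ hz
      simp only [if_neg hzN]
      have := welldef heq hz (hrne (z ^ N)) (hrpow (z ^ N) hzN).symm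
      rw [← this, mul_div_cancel₀ _ (zpow_ne_zero _ hz)]
  · intro g _ _ ζ hζ z hz
    have hζ0 : ζ ≠ 0 := by
      intro h; rw [h, zero_pow (by omega)] at hζ; exact zero_ne_one hζ
    rw [mul_pow, hζ, one_mul, mul_zpow]; ring
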